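/- arXiv:1910.02438 — 2 statements merged into one kernel-verified Lean document; each statement's English description precedes it below -/
import Mathlib

section
/- With the randomized rounding x of a unit vector v (x_i = sgn(v_i) with probability |v_i| independently), for any fixed indices i ≠ j, the conditional expectation E[xᵀx | x_i = ±1, x_j = ±1] ≤ 2 + √(n−2). -/
open Finset MeasureTheory ProbabilityTheory

theorem stmt9 {n : ℕ} {Ω : Type*} [MeasurableSpace Ω]
    (μ : Measure Ω) [IsProbabilityMeasure μ]
    (v : Fin n → ℝ) (hunit : ∑ i, (v i) ^ 2 = 1)
    (X : Fin n → Ω → ℝ)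
    (hmeas : ∀ i, Measurable (X i))
    (hind : iIndepFun X μ)
    (hval : ∀ i, ∀ ω, X i ω = Real.sign (v i) ∨ X i ω = 0)
    (hsgn : ∀ i, v i ≠ 0 → μ {ω | X i ω = Real.sign (v i)} = ENNReal.ofReal |v i|)
    (hzero : ∀ i, μ {ω | X i ω = 0} = ENNReal.ofReal (1 - |v i|)) :
    ∀ i j : Fin n, i ≠ j →
      (∫ ω, ∑ k, (X k ω) ^ 2 ∂(μ[|{ω | X i ω ≠ 0 ∧ X j ω ≠ 0}])) ≤
        2 + Real.sqrt ((n : ℝ) - 2) := by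
  intro i j hij
  have hsqrt0 : (0:ℝ) ≤ Real.sqrt ((n : ℝ) - 2) := Real.sqrt_nonneg _
  -- the events
  set A : Fin n → Set Ω := fun k => X k ⁻¹' ({0}ᶜ) with hA
  have hAmeas : ∀ k, MeasurableSet (A k) :=
    fun k => (hmeas k) (measurableSet_singleton 0).compl
  have hAcomap : ∀ k, MeasurableSet[MeasurableSpace.comap (X k) inferInstance] (A k) :=
    fun k => ⟨{0}ᶜ, (measurableSet_singleton 0).compl, rfl⟩
  set s : Set Ω := {ω | X i ω ≠ 0 ∧ X j ω ≠ 0} with hsdef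
  have hs_eq : s = A i ∩ A j := by
    ext ω; simp [hsdef, hA, Set.mem_preimage]
  have hsmeas : MeasurableSet s := by
    rw [hs_eq]; exact (hAmeas i).inter (hAmeas j)
  -- squares are indicators
  have hsq : ∀ k ω, (X k ω) ^ 2 = (A k).indicator (fun _ => (1:ℝ)) ω := by
    intro k ω
    by_cases h : X k ω = 0
    · rw [h, Set.indicator_of_notMem (by simp [hA, h])]
      norm_num
    · rw [Set.indicator_of_mem (by simpa [hA] using h)]
      have h1 : X k ω = Real.sign (v k) := (hval k ω).resolve_right h
      rcases Real.sign_apply_eq (v k) with hs1 | hs1 | hs1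
      · rw [h1, hs1]; norm_num
      · exact absurd (h1.trans hs1) h
      · rw [h1, hs1]; norm_num
  by_cases hs0 : μ s = 0
  · have : μ[|s] = 0 := by
      rw [ProbabilityTheory.cond, Measure.restrict_eq_zero.2 hs0]
      simp
    rw [this]
    simp
    linarith
  -- main case
  haveI : IsProbabilityMeasure (μ[|s]) := cond_isProbabilityMeasure hs0
  -- |v k| ≤ 1
  have hv1 : ∀ k, |v k| ≤ 1 := by
    intro k
    have h1 : (v k) ^ 2 ≤ 1 := by
      rw [← hunit]
      exact Finset.single_le_sum (fun m _ => sq_nonneg (v m)) (mem_univ k)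
    nlinarith [abs_nonneg (v k), sq_abs (v k)]
  -- measure of A k
  have hAk : ∀ k, μ (A k) = ENNReal.ofReal |v k| := by
    intro k
    have hc : (A k)ᶜ = {ω | X k ω = 0} := by
      ext ω; simp [hA, Set.mem_preimage]
    have heq : ENNReal.ofReal (1 - |v k|) = 1 - μ (A k) := by
      have h := measure_compl (hAmeas k) (measure_ne_top μ (A k))
      rw [hc, hzero k] at h
      simpa [measure_univ] using h
    have h2 : μ (A k) = 1 - ENNReal.ofReal (1 - |v k|) := by
      rw [heq, ENNReal.sub_sub_cancel ENNReal.one_ne_top prob_le_one]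
    rw [h2, ← ENNReal.ofReal_one, ← ENNReal.ofReal_sub _ (by linarith [hv1 k])]
    congr 1
    ring
  -- integral of each square under the conditional measure
  have hint : ∀ k, ∫ ω, (X k ω) ^ 2 ∂(μ[|s]) = ((μ[|s]) (A k)).toReal := by
    intro k
    have : ∫ ω, (X k ω) ^ 2 ∂(μ[|s]) = ∫ ω, (A k).indicator (fun _ => (1:ℝ)) ω ∂(μ[|s]) :=
      integral_congr_ae (Filter.Eventually.of_forall fun ω => hsq k ω)
    rw [this]
    exact integral_indicator_one (μ := μ[|s]) (hAmeas k)
  -- value of conditional measure on A k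
  have hprod2 : μ s = μ (A i) * μ (A j) := by
    have := hind.meas_biInter (S := {i, j}) (s := A)
      (fun k _ => hAcomap k)
    rw [hs_eq]
    rw [Finset.set_biInter_insert, Finset.prod_insert (by simpa using hij)] at this
    simpa using this
  have hcondval : ∀ k, k ≠ i → k ≠ j →
      (μ[|s]) (A k) = μ (A k) := by
    intro k hki hkj
    rw [cond_apply hsmeas]
    have h3 : μ (s ∩ A k) = μ (A i) * μ (A j) * μ (A k) := by
      have hmem : i ∈ ({i, j, k} : Finset (Fin n)) := by simp
      have := hind.meas_biInter (S := {i, j, k}) (s := A)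
        (fun m _ => hAcomap m)
      have hform : (⋂ m ∈ ({i, j, k} : Finset (Fin n)), A m) = s ∩ A k := by
        rw [hs_eq]
        ext ω
        simp only [Set.mem_iInter, Set.mem_inter_iff, Finset.mem_insert,
          Finset.mem_singleton, hA, Set.mem_preimage, Set.mem_compl_iff,
          Set.mem_singleton_iff, Set.mem_setOf_eq]
        constructor
        · intro hmem
          exact ⟨⟨hmem i (Or.inl rfl), hmem j (Or.inr (Or.inl rfl))⟩,
            hmem k (Or.inr (Or.inr rfl))⟩
        · rintro ⟨⟨h1, h2⟩, h3⟩ m hm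
          rcases hm with rfl | rfl | rfl <;> assumption
      rw [hform] at this
      rw [this, Finset.prod_insert, Finset.prod_insert, Finset.prod_singleton, mul_assoc]
      · simp [hkj.symm]
      · simp [hij, hki.symm]
    rw [h3, ← hprod2]
    rw [← mul_assoc, ENNReal.inv_mul_cancel hs0 (measure_ne_top μ s), one_mul]
  have hcondij : ∀ k, k = i ∨ k = j → (μ[|s]) (A k) = 1 := by
    intro k hk
    rw [cond_apply hsmeas]
    have hsub : s ∩ A k = s := by
      apply Set.inter_eq_self_of_subset_left
      intro ω hω
      rcases hk with rfl | rfl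
      · exact hω.1
      · exact hω.2
    rw [hsub, ENNReal.inv_mul_cancel hs0 (measure_ne_top μ s)]
  -- integrability
  have hinteg : ∀ k, Integrable (fun ω => (X k ω) ^ 2) (μ[|s]) := by
    intro k
    have : Integrable ((A k).indicator (fun _ => (1:ℝ))) (μ[|s]) :=
      (integrable_const (1:ℝ)).indicator (hAmeas k)
    exact this.congr (Filter.Eventually.of_forall fun ω => (hsq k ω).symm)
  rw [integral_finset_sum _ (fun k _ => hinteg k)]
  simp_rw [hint]
  -- split the sum
  have hn2 : 2 ≤ n := by
    have := Fintype.card_le_of_injective (fun b : Bool => if b then i else j)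
      (by intro a b hab; cases a <;> cases b <;> simp_all <;> exact (hij hab.symm).elim)
    simpa using this
  have hsplit : (univ : Finset (Fin n)) = {i, j} ∪ (univ \ {i, j}) := by
    rw [Finset.union_sdiff_of_subset (Finset.subset_univ _)]
  rw [hsplit, Finset.sum_union (Finset.disjoint_sdiff)]
  have h1 : ∑ k ∈ ({i, j} : Finset (Fin n)), ((μ[|s]) (A k)).toReal = 2 := by
    rw [Finset.sum_insert (by simpa using hij), Finset.sum_singleton,
      hcondij i (Or.inl rfl), hcondij j (Or.inr rfl)]
    norm_num
  have h2 : ∑ k ∈ univ \ ({i, j} : Finset (Fin n)), ((μ[|s]) (A k)).toReal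
      = ∑ k ∈ univ \ ({i, j} : Finset (Fin n)), |v k| := by
    apply Finset.sum_congr rfl
    intro k hk
    simp only [Finset.mem_sdiff, Finset.mem_insert, Finset.mem_singleton] at hk
    rw [hcondval k (fun h => hk.2 (Or.inl h)) (fun h => hk.2 (Or.inr h)), hAk k,
      ENNReal.toReal_ofReal (abs_nonneg _)]
  rw [h1, h2]
  have hcard : (univ \ ({i, j} : Finset (Fin n))).card = n - 2 := by
    rw [Finset.card_sdiff_of_subset (Finset.subset_univ _), Finset.card_univ, Fintype.card_fin,
      Finset.card_insert_of_notMem (by simpa using hij), Finset.card_singleton]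
  -- Cauchy-Schwarz
  have hCS : ∑ k ∈ univ \ ({i, j} : Finset (Fin n)), |v k| ≤ Real.sqrt ((n : ℝ) - 2) := by
    set T := univ \ ({i, j} : Finset (Fin n))
    have hsq2 : (∑ k ∈ T, |v k|) ^ 2 ≤ (∑ k ∈ T, (1:ℝ)^2) * ∑ k ∈ T, |v k| ^ 2 := by
      have := Finset.sum_mul_sq_le_sq_mul_sq T (fun _ => (1:ℝ)) (fun k => |v k|)
      simpa using this
    have hT1 : ∑ k ∈ T, (1:ℝ)^2 = (n : ℝ) - 2 := by
      simp only [one_pow, Finset.sum_const, nsmul_eq_mul, mul_one, hcard]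
      push_cast [Nat.cast_sub hn2]
      ring
    have hT2 : ∑ k ∈ T, |v k| ^ 2 ≤ 1 := by
      rw [← hunit]
      apply Finset.sum_le_sum_of_subset_of_nonneg (Finset.subset_univ _)
        (fun m _ _ => sq_nonneg (v m)) |>.trans_eq'
      exact Finset.sum_congr rfl fun k _ => (sq_abs (v k)).symm
    have hn2' : (0:ℝ) ≤ (n : ℝ) - 2 := by
      have : (2:ℝ) ≤ n := by exact_mod_cast hn2
      linarith
    have hx : (∑ k ∈ T, |v k|) ^ 2 ≤ (n : ℝ) - 2 := by
      calc (∑ k ∈ T, |v k|) ^ 2 ≤ ((n : ℝ) - 2) * ∑ k ∈ T, |v k| ^ 2 := by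
            rw [← hT1]; exact hsq2
        _ ≤ (n : ℝ) - 2 := by nlinarith
    have hnn : 0 ≤ ∑ k ∈ T, |v k| := Finset.sum_nonneg fun k _ => abs_nonneg _
    exact (Real.le_sqrt hnn hn2').2 hx
  linarith
end

section
/- For the complete signed graph on n > 16 vertices whose negative edges form a Hamiltonian cycle, the all-ones vector x = (1,…,1) ∈ {−1,0,1}ⁿ achieves objective xᵀAx / xᵀx = n − 5, which equals the largest eigenvalue λ₁; hence OPT = n − 5 for this instance of the 2PC problem. -/
open Matrix Finset

variable {n : ℕ} [NeZero n]

lemma fin_mod_aux (hn : 16 < n) (a k : ℕ) (ha : a < n) (hk : 0 < k) (hk' : k < 16)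
    (h : (a + k) % n = a) : False := by
  rcases Nat.lt_or_ge (a + k) n with hc | hc
  · rw [Nat.mod_eq_of_lt hc] at h; omega
  · rw [Nat.mod_eq_sub_mod hc, Nat.mod_eq_of_lt (by omega)] at h; omega

lemma fin_self_ne_add_one (hn : 16 < n) (i : Fin n) : i ≠ i + 1 := by
  intro h
  have hv : (i + 1).val = (i.val + 1) % n := by
    rw [Fin.add_def]; simp [Fin.val_one', Nat.mod_eq_of_lt (show 1 < n by omega)]
  exact fin_mod_aux hn i.val 1 i.isLt one_pos (by omega) (by rw [← hv, ← h])

lemma fin_self_ne_add_two (hn : 16 < n) (i : Fin n) : i ≠ i + 1 + 1 := by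
  intro h
  have hv : (i + 1 + 1).val = (i.val + 2) % n := by
    rw [Fin.add_def, Fin.add_def]
    simp [Fin.val_one', Nat.mod_eq_of_lt (show 1 < n by omega), Nat.add_mod_left]
  exact fin_mod_aux hn i.val 2 i.isLt two_pos (by omega) (by rw [← hv, ← h])

set_option maxHeartbeats 1000000 in
lemma Adecomp (hn : 16 < n) (A : Matrix (Fin n) (Fin n) ℝ)
    (hAdef : ∀ i j : Fin n, A i j =
      if i = j then 0 else if j = i + 1 ∨ i = j + 1 then -1 else 1) (i j : Fin n) :
    A i j = 1 - (if i = j then 1 else 0) - 2 * (if j = i + 1 then 1 else 0)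
      - 2 * (if j = i - 1 then 1 else 0) := by
  have hiff : (i = j + 1) ↔ (j = i - 1) := by
    constructor <;> intro h <;> [skip; skip] <;> subst h <;> simp
  rw [hAdef]
  by_cases h1 : i = j
  · subst h1
    rw [if_pos rfl, if_pos rfl, if_neg (fin_self_ne_add_one hn i)]
    rw [if_neg (show i ≠ i - 1 by
      intro h; exact fin_self_ne_add_one hn i (by nth_rewrite 2 [h]; rw [sub_add_cancel]))]
    norm_num
  · rw [if_neg h1, if_neg h1]
    by_cases h2 : j = i + 1
    · have h3 : j ≠ i - 1 := by
        intro h4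
        have : i + 1 = i - 1 := by rw [← h2, h4]
        exact fin_self_ne_add_two hn (i - 1) (by
          rw [sub_add_cancel]; exact this.symm)
      rw [if_pos (Or.inl h2), if_pos h2, if_neg h3]; norm_num
    · by_cases h3 : i = j + 1
      · rw [if_pos (Or.inr h3), if_neg h2, if_pos (hiff.mp h3)]; norm_num
      · rw [if_neg (by tauto), if_neg h2, if_neg (fun h => h3 (hiff.mpr h))]; norm_num

lemma quadform (hn : 16 < n) (A : Matrix (Fin n) (Fin n) ℝ)
    (hAdef : ∀ i j : Fin n, A i j =
      if i = j then 0 else if j = i + 1 ∨ i = j + 1 then -1 else 1) (y : Fin n → ℝ) :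
    y ⬝ᵥ A.mulVec y = (∑ i, y i)^2 - (∑ i, (y i)^2) - 4 * ∑ i, y i * y (i+1) := by
  have key : y ⬝ᵥ A.mulVec y = ∑ i, ∑ j,
      (y i * y j - (if i = j then y i * y j else 0)
        - (if j = i + 1 then 2 * (y i * y j) else 0)
        - (if j = i - 1 then 2 * (y i * y j) else 0)) := by
    simp only [dotProduct, mulVec, Finset.mul_sum]
    refine Finset.sum_congr rfl fun i _ => Finset.sum_congr rfl fun j _ => ?_
    rw [Adecomp hn A hAdef i j]; split_ifs <;> ring
  rw [key]
  simp only [Finset.sum_sub_distrib, Finset.sum_ite_eq, Finset.sum_ite_eq',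
    Finset.mem_univ, if_true]
  have e1 : ∑ i : Fin n, ∑ j : Fin n, y i * y j = (∑ i, y i)^2 := by
    rw [sq, Finset.sum_mul_sum]
  have e2 : ∑ i : Fin n, y i * y i = ∑ i, (y i)^2 := by
    refine Finset.sum_congr rfl fun i _ => (sq (y i)).symm ▸ by ring
  have e4 : ∑ i : Fin n, 2 * (y i * y (i - 1)) = ∑ i : Fin n, 2 * (y i * y (i + 1)) :=
    (Fintype.sum_equiv (Equiv.addRight (1 : Fin n))
      (fun i => 2 * (y i * y (i + 1))) (fun i => 2 * (y i * y (i - 1)))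
      (fun x => by simp [Equiv.coe_addRight]; ring)).symm
  rw [e1, e2, e4, ← Finset.mul_sum]
  ring

lemma shift_sum (f : Fin n → ℝ) : ∑ i : Fin n, f (i + 1) = ∑ i, f i :=
  Fintype.sum_equiv (Equiv.addRight (1 : Fin n)) _ _ (fun _ => rfl)

lemma quadbound (hn : 16 < n) (A : Matrix (Fin n) (Fin n) ℝ)
    (hAdef : ∀ i j : Fin n, A i j =
      if i = j then 0 else if j = i + 1 ∨ i = j + 1 then -1 else 1) (y : Fin n → ℝ) :
    y ⬝ᵥ A.mulVec y ≤ ((n:ℝ) - 5) * (y ⬝ᵥ y) := by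
  set S1 := ∑ i, y i with hS1
  set S2 := ∑ i, (y i)^2 with hS2
  set P := ∑ i, y i * y (i+1) with hP
  set Z := ∑ i, (y i + y (i+1))^2 with hZdef
  have hyy : y ⬝ᵥ y = S2 := by
    simp only [dotProduct, hS2, sq]
  have hZ : Z = 2*S2 + 2*P := by
    have h1 : Z = ∑ i, ((y i)^2 + 2*(y i * y (i+1)) + (y (i+1))^2) :=
      Finset.sum_congr rfl fun i _ => by ring
    rw [h1, Finset.sum_add_distrib, Finset.sum_add_distrib,
      shift_sum (fun i => (y i)^2), ← Finset.mul_sum, ← hS2, ← hP]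
    ring
  have CS1 : S1^2 ≤ (n:ℝ) * S2 := by
    simpa using sq_sum_le_card_mul_sum_sq (s := Finset.univ) (f := y)
  have CS2 : (2*S1)^2 ≤ (n:ℝ) * Z := by
    have h2 := sq_sum_le_card_mul_sum_sq (s := Finset.univ) (f := fun i : Fin n => y i + y (i+1))
    have h3 : ∑ i : Fin n, (y i + y (i+1)) = 2 * S1 := by
      rw [Finset.sum_add_distrib, shift_sum y, ← hS1]; ring
    rw [h3] at h2
    simpa using h2
  have hnpos : (0:ℝ) < (n:ℝ) := by positivity
  have hn8 : (0:ℝ) ≤ (n:ℝ) - 8 := by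
    have : (16:ℝ) < n := by exact_mod_cast hn
    linarith
  have key : (n:ℝ) * (S1^2) ≤ (n:ℝ) * (((n:ℝ)-8)*S2 + 2*Z) := by
    nlinarith [mul_le_mul_of_nonneg_left CS1 hn8]
  have key2 : S1^2 ≤ ((n:ℝ)-8)*S2 + 2*Z := le_of_mul_le_mul_left key hnpos
  rw [quadform hn A hAdef y, hyy, ← hS1, ← hS2, ← hP]
  linarith

lemma rowsum (hn : 16 < n) (A : Matrix (Fin n) (Fin n) ℝ)
    (hAdef : ∀ i j : Fin n, A i j =
      if i = j then 0 else if j = i + 1 ∨ i = j + 1 then -1 else 1) (i : Fin n) :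
    ∑ j, A i j = (n:ℝ) - 5 := by
  have h1 : ∑ j, A i j = ∑ j : Fin n, ((1:ℝ) - (if i = j then 1 else 0)
      - (if j = i + 1 then 2 else 0) - (if j = i - 1 then 2 else 0)) := by
    refine Finset.sum_congr rfl fun j _ => ?_
    rw [Adecomp hn A hAdef i j]; split_ifs <;> ring
  rw [h1]
  simp only [Finset.sum_sub_distrib, Finset.sum_ite_eq, Finset.sum_ite_eq',
    Finset.mem_univ, if_true, Finset.sum_const, Finset.card_univ, Fintype.card_fin,
    nsmul_eq_mul, mul_one]
  ring

theorem stmt12 {n : ℕ} [NeZero n] (hn : 16 < n)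
    (A : Matrix (Fin n) (Fin n) ℝ)
    (hAdef : ∀ i j : Fin n, A i j =
      if i = j then 0 else if j = i + 1 ∨ i = j + 1 then -1 else 1)
    (hA : A.IsHermitian)
    (x : Fin n → ℝ) (hxdef : x = fun _ => 1) :
    x ⬝ᵥ A.mulVec x / (x ⬝ᵥ x) = (n : ℝ) - 5 ∧
    (⨆ i, hA.eigenvalues i) = (n : ℝ) - 5 ∧
    ∀ y : Fin n → ℝ, (∀ i, y i = -1 ∨ y i = 0 ∨ y i = 1) → y ≠ 0 →
      y ⬝ᵥ A.mulVec y / (y ⬝ᵥ y) ≤ (n : ℝ) - 5 := by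
  have hnpos : (0:ℝ) < (n:ℝ) := by positivity
  have hmv : A.mulVec x = ((n:ℝ) - 5) • x := by
    funext i
    simp only [hxdef, mulVec, dotProduct, mul_one, Pi.smul_apply, smul_eq_mul]
    exact rowsum hn A hAdef i
  have hxx : x ⬝ᵥ x = (n:ℝ) := by
    simp [hxdef, dotProduct]
  have hxAx : x ⬝ᵥ A.mulVec x = ((n:ℝ) - 5) * n := by
    rw [hmv, dotProduct_smul, hxx, smul_eq_mul]
  refine ⟨by rw [hxAx, hxx]; field_simp, ?_, ?_⟩
  · -- eigenvalue part
    have hx0 : x ≠ 0 := by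
      rw [hxdef]
      intro h
      have := congrFun h ⟨0, by omega⟩
      norm_num at this
    have hub : ∀ i, hA.eigenvalues i ≤ (n:ℝ) - 5 := by
      intro i
      have hev := hA.mulVec_eigenvectorBasis i
      set v : Fin n → ℝ := ⇑(hA.eigenvectorBasis i) with hv
      have hvAv : v ⬝ᵥ A.mulVec v = hA.eigenvalues i * (v ⬝ᵥ v) := by
        rw [hev]
        simp [dotProduct_smul]
      have hb := quadbound hn A hAdef v
      have hv0 : v ≠ 0 := by
        have := (hA.eigenvectorBasis).toBasis.ne_zero i
        simpa [hv] using this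
      have hvv : 0 < v ⬝ᵥ v := by
        obtain ⟨j, hj⟩ := Function.ne_iff.mp hv0
        have : v ⬝ᵥ v = ∑ k, (v k)^2 := by simp [dotProduct, sq]
        rw [this]
        exact Finset.sum_pos' (fun k _ => sq_nonneg _)
          ⟨j, Finset.mem_univ j, lt_of_le_of_ne (sq_nonneg _) (Ne.symm (pow_ne_zero 2 hj))⟩
      rw [hvAv] at hb
      exact le_of_mul_le_mul_right (by linarith) hvv
    have hmem : ((n:ℝ) - 5) ∈ Set.range hA.eigenvalues := by
      rw [← Matrix.IsHermitian.spectrum_real_eq_range_eigenvalues hA]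
      rw [← AlgEquiv.spectrum_eq (Matrix.toLinAlgEquiv (Pi.basisFun ℝ (Fin n))) A,
        ← Module.End.hasEigenvalue_iff_mem_spectrum]
      apply Module.End.hasEigenvalue_of_hasEigenvector (x := x)
      refine ⟨Module.End.mem_eigenspace_iff.mpr ?_, hx0⟩
      show Matrix.toLin _ _ A x = _
      rw [Matrix.toLin_eq_toLin', Matrix.toLin'_apply, hmv]
    obtain ⟨i0, hi0⟩ := hmem
    refine le_antisymm (ciSup_le hub) ?_
    rw [← hi0]
    exact le_ciSup (Set.Finite.bddAbove (Set.finite_range _)) i0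
  · intro y _ hy0
    have hb := quadbound hn A hAdef y
    have hyy : 0 < y ⬝ᵥ y := by
      obtain ⟨j, hj⟩ := Function.ne_iff.mp hy0
      have : y ⬝ᵥ y = ∑ k, (y k)^2 := by simp [dotProduct, sq]
      rw [this]
      exact Finset.sum_pos' (fun k _ => sq_nonneg _)
        ⟨j, Finset.mem_univ j, lt_of_le_of_ne (sq_nonneg _) (Ne.symm (pow_ne_zero 2 hj))⟩
    rw [div_le_iff₀ hyy]
    linarith
end
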